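/- For every r ∈ (0,1), the derivative of ψ at r is strictly negative, where ψ(r) := (1−2r)/(2·√r·(1−r)) − (3/2)·log(1+√r) + (1−r)/(2·(√r + r)) + (3/4)·log(1−r) + 1/2. In particular, ψ is strictly decreasing on (0,1). -/

import Mathlib

/-- `ψ(r) = (1−2r)/(2√r(1−r)) − (3/2)log(1+√r) + (1−r)/(2(√r+r)) + (3/4)log(1−r) + 1/2`. -/
noncomputable def psi (r : ℝ) : ℝ :=
  (1 - 2 * r) / (2 * Real.sqrt r * (1 - r)) - (3 / 2) * Real.log (1 + Real.sqrt r)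
    + (1 - r) / (2 * (Real.sqrt r + r)) + (3 / 4) * Real.log (1 - r) + 1 / 2

lemma psi_hasDerivAt (r : ℝ) (hr : r ∈ Set.Ioo (0 : ℝ) 1) :
    ∃ D : ℝ, HasDerivAt psi D r ∧ D < 0 := by
  obtain ⟨hr0, hr1⟩ := hr
  set s := Real.sqrt r with hs
  have hs0 : 0 < s := Real.sqrt_pos.mpr hr0
  have hs1 : s < 1 := by
    rw [hs, show (1:ℝ) = Real.sqrt 1 by simp]
    exact Real.sqrt_lt_sqrt hr0.le hr1
  have hsr : s ^ 2 = r := Real.sq_sqrt hr0.le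
  have h1r : (0:ℝ) < 1 - r := by linarith
  have hsqrt : HasDerivAt Real.sqrt (1 / (2 * s)) r := by
    simpa [hs] using Real.hasDerivAt_sqrt hr0.ne'
  -- f1
  have hnum1 : HasDerivAt (fun x : ℝ => 1 - 2 * x) (-2) r := by
    simpa [Pi.sub_def] using (hasDerivAt_const r (1:ℝ)).sub ((hasDerivAt_id r).const_mul (2:ℝ))
  have hlin : HasDerivAt (fun x : ℝ => 1 - x) (-1) r := by
    simpa [Pi.sub_def] using (hasDerivAt_const r (1:ℝ)).sub (hasDerivAt_id' r)
  have hden1 : HasDerivAt (fun x : ℝ => 2 * Real.sqrt x * (1 - x))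
      (2 * (1 / (2 * s)) * (1 - r) + 2 * s * (-1)) r :=
    (hsqrt.const_mul 2).mul hlin
  have hden1ne : 2 * s * (1 - r) ≠ 0 := by positivity
  have hf1 : HasDerivAt (fun x : ℝ => (1 - 2 * x) / (2 * Real.sqrt x * (1 - x)))
      (((-2) * (2 * s * (1 - r)) - (1 - 2 * r) * (2 * (1 / (2 * s)) * (1 - r) + 2 * s * (-1)))
        / (2 * s * (1 - r)) ^ 2) r :=
    hnum1.div hden1 hden1ne
  -- f2
  have hf2 : HasDerivAt (fun x : ℝ => Real.log (1 + Real.sqrt x)) ((1 / (2 * s)) / (1 + s)) r := by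
    have h : HasDerivAt (fun x : ℝ => 1 + Real.sqrt x) (1 / (2 * s)) r := by
      simpa [Pi.add_def] using (hasDerivAt_const r (1:ℝ)).add hsqrt
    exact h.log (by positivity)
  -- f3
  have hden3 : HasDerivAt (fun x : ℝ => 2 * (Real.sqrt x + x)) (2 * (1 / (2 * s) + 1)) r :=
    (hsqrt.add (hasDerivAt_id r)).const_mul 2
  have hden3ne : 2 * (s + r) ≠ 0 := by positivity
  have hf3 : HasDerivAt (fun x : ℝ => (1 - x) / (2 * (Real.sqrt x + x)))
      (((-1) * (2 * (s + r)) - (1 - r) * (2 * (1 / (2 * s) + 1))) / (2 * (s + r)) ^ 2) r :=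
    hlin.div hden3 hden3ne
  -- f4
  have hf4 : HasDerivAt (fun x : ℝ => Real.log (1 - x)) ((-1) / (1 - r)) r :=
    hlin.log (by linarith)
  -- combine
  set D : ℝ :=
    ((-2) * (2 * s * (1 - r)) - (1 - 2 * r) * (2 * (1 / (2 * s)) * (1 - r) + 2 * s * (-1)))
        / (2 * s * (1 - r)) ^ 2
      - 3 / 2 * ((1 / (2 * s)) / (1 + s))
      + ((-1) * (2 * (s + r)) - (1 - r) * (2 * (1 / (2 * s) + 1))) / (2 * (s + r)) ^ 2
      + 3 / 4 * ((-1) / (1 - r)) with hD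
  refine ⟨D, ?_, ?_⟩
  · have := (((hf1.sub (hf2.const_mul (3/2))).add hf3).add (hf4.const_mul (3/4))).add_const (1/2)
    refine this.congr_of_eventuallyEq (Filter.Eventually.of_forall fun x => ?_)
    simp only [psi, Pi.add_apply, Pi.sub_apply]
  · have h1s : (0:ℝ) < 1 - s := by linarith
    have h1s' : (0:ℝ) < 1 + s := by linarith
    have key : D = -(1 / (2 * s ^ 3) + 1 / (8 * s * (1 - s) ^ 2) + 1 / (8 * s * (1 + s) ^ 2)
        + 3 / (4 * s * (1 - s ^ 2))) := by
      rw [hD, ← hsr]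
      have h2 : (1 : ℝ) - s ^ 2 ≠ 0 := by nlinarith
      field_simp
      ring
    rw [key]
    have : (0:ℝ) < 1 / (2 * s ^ 3) + 1 / (8 * s * (1 - s) ^ 2) + 1 / (8 * s * (1 + s) ^ 2)
        + 3 / (4 * s * (1 - s ^ 2)) := by
      have : (0:ℝ) < 1 - s ^ 2 := by nlinarith
      positivity
    linarith

/-- The derivative of `ψ` is strictly negative on `(0,1)`; in particular `ψ` is
strictly decreasing on `(0,1)`. -/
theorem stmt_10 :
    (∀ r ∈ Set.Ioo (0 : ℝ) 1, deriv psi r < 0) ∧ StrictAntiOn psi (Set.Ioo (0 : ℝ) 1) := by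
  have hderiv : ∀ r ∈ Set.Ioo (0 : ℝ) 1, deriv psi r < 0 := by
    intro r hr
    obtain ⟨D, hD, hDneg⟩ := psi_hasDerivAt r hr
    rwa [hD.deriv]
  refine ⟨hderiv, ?_⟩
  apply strictAntiOn_of_deriv_neg (convex_Ioo 0 1)
  · intro x hx
    obtain ⟨D, hD, -⟩ := psi_hasDerivAt x hx
    exact hD.differentiableAt.continuousAt.continuousWithinAt
  · intro x hx
    exact hderiv x (by simpa [interior_Ioo] using hx)
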